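/- Let m ≥ 38 be an even integer, let G be a graph attaining the maximum spectral radius among all H(4,3)-free graphs with m edges and no isolated vertices, let x be a positive eigenvector of the adjacency matrix of G corresponding to ρ(G), and let u* be a vertex at which x attains its maximum entry. Set N = N(u*), W = V(G) ∖ N[u*], A₊ = {v ∈ N : v has at least one neighbor in N}. Then e(W) ≤ e(A₊) − |A₊| + 1, where e(W) is the number of edges of G with both endpoints in W and e(A₊) is the number of edges of G with both endpoints in A₊. -/

import Mathlib

open SimpleGraph Matrix

/-- `H` occurs as a subgraph of `G`: an injective map sending adjacent vertices to
adjacent vertices. -/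
def ContainsSub {α β : Type*} (H : SimpleGraph α) (G : SimpleGraph β) : Prop :=
  ∃ f : α → β, Function.Injective f ∧ ∀ ⦃a b⦄, H.Adj a b → G.Adj (f a) (f b)

/-- The graph `H(4,3)`: a 4-cycle `0-1-2-3-0` and a triangle `0-4-5-0`
sharing the common vertex `0`. -/
def H43 : SimpleGraph (Fin 6) :=
  SimpleGraph.fromEdgeSet {s(0,1), s(1,2), s(2,3), s(3,0), s(0,4), s(4,5), s(5,0)}

/-- `G` is `H(4,3)`-free. -/
def H43Free {β : Type*} (G : SimpleGraph β) : Prop := ¬ ContainsSub H43 G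

open Classical in
/-- The real adjacency matrix of a simple graph. -/
noncomputable def adjMat {V : Type*} (G : SimpleGraph V) : Matrix V V ℝ :=
  fun i j => if G.Adj i j then 1 else 0

/-- The spectral radius of a finite simple graph: the largest eigenvalue of its
adjacency matrix. -/
noncomputable def specRad {V : Type*} [Fintype V] (G : SimpleGraph V) : ℝ :=
  sSup {t : ℝ | ∃ x : V → ℝ, x ≠ 0 ∧ (adjMat G).mulVec x = t • x}

/-- `S_{n,2} = K₂ ∨ (n-2)K₁`: vertices `0` and `1` are adjacent to everything. -/
def Sgraph (n : ℕ) : SimpleGraph (Fin n) where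
  Adj i j := i ≠ j ∧ (i.val < 2 ∨ j.val < 2)
  symm := by constructor; rintro i j ⟨h1, h2⟩; exact ⟨h1.symm, h2.symm⟩
  loopless := by constructor; rintro i ⟨h1, _⟩; exact h1 rfl

/-- `S⁻_{n,2}`: the graph `S_{n,2}` with the edge `{1,2}` (an edge incident to a
vertex of degree two) deleted. -/
def SgraphMinus (n : ℕ) : SimpleGraph (Fin n) where
  Adj i j := i ≠ j ∧ (i.val < 2 ∨ j.val < 2) ∧
    ¬(i.val = 1 ∧ j.val = 2) ∧ ¬(i.val = 2 ∧ j.val = 1)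
  symm := by
    constructor
    rintro i j ⟨h1, h2, h3, h4⟩
    exact ⟨h1.symm, h2.symm, fun hc => h4 ⟨hc.2, hc.1⟩, fun hc => h3 ⟨hc.2, hc.1⟩⟩
  loopless := by constructor; rintro i ⟨h1, _⟩; exact h1 rfl

/-- The graph obtained from `S_{k,2}` (on vertices `0,…,k-1`, with `0,1` dominating)
by joining the maximum degree vertex `0` to `l` new vertices `k,…,k+l-1`. -/
def Fgraph (k l : ℕ) : SimpleGraph (Fin (k + l)) where
  Adj i j := i ≠ j ∧ (i.val = 0 ∨ j.val = 0 ∨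
    (i.val < k ∧ j.val < k ∧ (i.val = 1 ∨ j.val = 1)))
  symm := by
    constructor
    rintro i j ⟨h1, h2⟩
    refine ⟨h1.symm, ?_⟩
    rcases h2 with h | h | ⟨ha, hb, hc⟩
    · exact Or.inr (Or.inl h)
    · exact Or.inl h
    · exact Or.inr (Or.inr ⟨hb, ha, hc.symm⟩)
  loopless := by constructor; rintro i ⟨h1, _⟩; exact h1 rfl

/-- The star `K_{1,t}` with center `0`. -/
def starG (t : ℕ) : SimpleGraph (Fin (t + 1)) where
  Adj i j := i ≠ j ∧ (i.val = 0 ∨ j.val = 0)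
  symm := by constructor; rintro i j ⟨h1, h2⟩; exact ⟨h1.symm, h2.symm⟩
  loopless := by constructor; rintro i ⟨h1, _⟩; exact h1 rfl

/-- `e(S)`: the number of edges of `G` with both endpoints in `S`. -/
noncomputable def eIn {V : Type*} (G : SimpleGraph V) (S : Set V) : ℕ :=
  {e ∈ G.edgeSet | ∀ v ∈ e, v ∈ S}.ncard

/-- `e(S,T)`: the number of edges of `G` with one endpoint in `S` and the other in `T`. -/
noncomputable def eBetween {V : Type*} (G : SimpleGraph V) (S T : Set V) : ℕ :=
  {e ∈ G.edgeSet | ∃ a ∈ S, ∃ b ∈ T, e = s(a, b)}.ncard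

/-- `G` attains the maximum spectral radius among all `H(4,3)`-free graphs with `m`
edges and no isolated vertices. -/
def IsExtremal (m : ℕ) {V : Type*} [Fintype V] (G : SimpleGraph V) : Prop :=
  H43Free G ∧ G.edgeSet.ncard = m ∧ (∀ v : V, ∃ w, G.Adj v w) ∧
    ∀ (n : ℕ) (G' : SimpleGraph (Fin n)), H43Free G' → G'.edgeSet.ncard = m →
      (∀ v, ∃ w, G'.Adj v w) → specRad G' ≤ specRad G


section Aux
open Finset

/-- numeric adjacency condition -/
def Cnum (a b : ℕ) : Prop := a ≠ b ∧ (a < 2 ∨ b < 2) ∧ ¬(a = 1 ∧ b = 2) ∧ ¬(a = 2 ∧ b = 1)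

instance : DecidablePred fun p : ℕ × ℕ => Cnum p.1 p.2 := fun _ => by
  unfold Cnum; infer_instance

instance (a b : ℕ) : Decidable (Cnum a b) := by unfold Cnum; infer_instance

lemma sgm_adj_iff {n : ℕ} (i j : Fin n) : (SgraphMinus n).Adj i j ↔ Cnum i.val j.val := by
  unfold SgraphMinus Cnum
  simp [Fin.ne_iff_vne]

instance sgmDec (n : ℕ) : DecidableRel (SgraphMinus n).Adj := fun i j =>
  decidable_of_iff _ (sgm_adj_iff i j).symm

lemma sum_split3 {M : Type*} [AddCommMonoid M] (n : ℕ) (hn : 3 ≤ n) (g : ℕ → M) :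
    ∑ k ∈ Finset.range n, g k = g 0 + g 1 + g 2 + ∑ k ∈ Finset.Ico 3 n, g k := by
  rw [Finset.range_eq_Ico, ← Finset.sum_Ico_consecutive _ (Nat.zero_le 3) hn]
  congr 1
  rw [← Finset.range_eq_Ico]
  simp [Finset.sum_range_succ]

lemma sum_tail_const {M : Type*} [AddCommMonoid M] (n : ℕ) (g : ℕ → M) (c : M)
    (hg : ∀ k, 3 ≤ k → g k = c) :
    ∑ k ∈ Finset.Ico 3 n, g k = (n - 3) • c := by
  rw [Finset.sum_congr rfl fun k hk => hg k (Finset.mem_Ico.1 hk).1]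
  simp [Nat.card_Ico]

lemma pair01 {n : ℕ} (v w : Fin n) (hvw : v ≠ w) (hv : v.val < 2) (hw : w.val < 2) :
    (v.val = 0 ∧ w.val = 1) ∨ (v.val = 1 ∧ w.val = 0) := by
  have : v.val ≠ w.val := fun h => hvw (Fin.ext h)
  omega

lemma sgm_h43free (n : ℕ) : H43Free (SgraphMinus n) := by
  rintro ⟨f, hinj, hadj⟩
  have e01 : H43.Adj 0 1 := by
    rw [H43, SimpleGraph.fromEdgeSet_adj]; exact ⟨by norm_num, by decide⟩
  have h01 : (SgraphMinus n).Adj (f 0) (f 1) := hadj e01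
  have e23 : H43.Adj 2 3 := by
    rw [H43, SimpleGraph.fromEdgeSet_adj]; exact ⟨by norm_num, by decide⟩
  have h23 : (SgraphMinus n).Adj (f 2) (f 3) := hadj e23
  have e04 : H43.Adj 0 4 := by
    rw [H43, SimpleGraph.fromEdgeSet_adj]; exact ⟨by norm_num, by decide⟩
  have h04 : (SgraphMinus n).Adj (f 0) (f 4) := hadj e04
  have e45 : H43.Adj 4 5 := by
    rw [H43, SimpleGraph.fromEdgeSet_adj]; exact ⟨by norm_num, by decide⟩
  have h45 : (SgraphMinus n).Adj (f 4) (f 5) := hadj e45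
  have e50 : H43.Adj 5 0 := by
    rw [H43, SimpleGraph.fromEdgeSet_adj]; exact ⟨by norm_num, by decide⟩
  have h50 : (SgraphMinus n).Adj (f 5) (f 0) := hadj e50
  have d01 := ((sgm_adj_iff _ _).1 h01).2.1
  have d23 := ((sgm_adj_iff _ _).1 h23).2.1
  have d04 := ((sgm_adj_iff _ _).1 h04).2.1
  have d45 := ((sgm_adj_iff _ _).1 h45).2.1
  have d50 := ((sgm_adj_iff _ _).1 h50).2.1
  -- triangle {0,4,5}: there are indices c,d in {0,4,5} with (f c).val = 0, (f d).val = 1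
  have tri : ∃ c d : Fin 6, (c = 0 ∨ c = 4 ∨ c = 5) ∧ (d = 0 ∨ d = 4 ∨ d = 5) ∧
      (f c).val = 0 ∧ (f d).val = 1 := by
    have mk : ∀ i j : Fin 6, i ≠ j → (i = 0 ∨ i = 4 ∨ i = 5) → (j = 0 ∨ j = 4 ∨ j = 5) →
        (f i).val < 2 → (f j).val < 2 →
        ∃ c d : Fin 6, (c = 0 ∨ c = 4 ∨ c = 5) ∧ (d = 0 ∨ d = 4 ∨ d = 5) ∧
          (f c).val = 0 ∧ (f d).val = 1 := by
      intro i j hij hi hj hfi hfj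
      rcases pair01 (f i) (f j) (fun h => hij (hinj h)) hfi hfj with ⟨e0, e1⟩ | ⟨e1, e0⟩
      · exact ⟨i, j, hi, hj, e0, e1⟩
      · exact ⟨j, i, hj, hi, e0, e1⟩
    rcases d04 with p0 | p4
    · rcases d45 with p4 | p5
      · exact mk 0 4 (by decide) (Or.inl rfl) (Or.inr (Or.inl rfl)) p0 p4
      · exact mk 0 5 (by decide) (Or.inl rfl) (Or.inr (Or.inr rfl)) p0 p5
    · rcases d50 with p5 | p0
      · exact mk 4 5 (by decide) (Or.inr (Or.inl rfl)) (Or.inr (Or.inr rfl)) p4 p5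
      · exact mk 0 4 (by decide) (Or.inl rfl) (Or.inr (Or.inl rfl)) p0 p4
  -- cycle {0,1,2,3}
  have cyc : ∃ a b : Fin 6, (a = 0 ∨ a = 1 ∨ a = 2 ∨ a = 3) ∧ (b = 0 ∨ b = 1 ∨ b = 2 ∨ b = 3) ∧
      (f a).val = 0 ∧ (f b).val = 1 := by
    have mk : ∀ i j : Fin 6, i ≠ j → (i = 0 ∨ i = 1 ∨ i = 2 ∨ i = 3) →
        (j = 0 ∨ j = 1 ∨ j = 2 ∨ j = 3) → (f i).val < 2 → (f j).val < 2 →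
        ∃ a b : Fin 6, (a = 0 ∨ a = 1 ∨ a = 2 ∨ a = 3) ∧ (b = 0 ∨ b = 1 ∨ b = 2 ∨ b = 3) ∧
          (f a).val = 0 ∧ (f b).val = 1 := by
      intro i j hij hi hj hfi hfj
      rcases pair01 (f i) (f j) (fun h => hij (hinj h)) hfi hfj with ⟨e0, e1⟩ | ⟨e1, e0⟩
      · exact ⟨i, j, hi, hj, e0, e1⟩
      · exact ⟨j, i, hj, hi, e0, e1⟩
    rcases d01 with p0 | p1
    · rcases d23 with p2 | p3
      · exact mk 0 2 (by decide) (Or.inl rfl) (Or.inr (Or.inr (Or.inl rfl))) p0 p2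
      · exact mk 0 3 (by decide) (Or.inl rfl) (Or.inr (Or.inr (Or.inr rfl))) p0 p3
    · rcases d23 with p2 | p3
      · exact mk 1 2 (by decide) (Or.inr (Or.inl rfl)) (Or.inr (Or.inr (Or.inl rfl))) p1 p2
      · exact mk 1 3 (by decide) (Or.inr (Or.inl rfl)) (Or.inr (Or.inr (Or.inr rfl))) p1 p3
  obtain ⟨c, d, hc, hd, hc0, hd1⟩ := tri
  obtain ⟨a, b, ha, hb, ha0, hb1⟩ := cyc
  have hac : a = c := hinj (Fin.ext (ha0.trans hc0.symm))
  have hbd : b = d := hinj (Fin.ext (hb1.trans hd1.symm))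
  have ha' : a = 0 := by
    rcases ha with rfl | rfl | rfl | rfl <;> rcases hc with rfl | rfl | rfl <;>
      first | rfl | exact absurd hac (by decide)
  have hb' : b = 0 := by
    rcases hb with rfl | rfl | rfl | rfl <;> rcases hd with rfl | rfl | rfl <;>
      first | rfl | exact absurd hbd (by decide)
  rw [ha'] at ha0
  rw [hb'] at hb1
  omega

lemma adjMat_isHermitian {V : Type*} (G : SimpleGraph V) : (adjMat G).IsHermitian := by
  classical
  show (adjMat G).conjTranspose = adjMat G
  ext i j
  rw [Matrix.conjTranspose_apply]
  unfold adjMat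
  rw [star_trivial]
  exact if_congr (G.adj_comm j i) rfl rfl

lemma sgm_degree (n : ℕ) (i : Fin n) :
    (SgraphMinus n).degree i = ∑ k ∈ Finset.range n, (if Cnum i.val k then 1 else 0) := by
  rw [← SimpleGraph.card_neighborFinset_eq_degree, SimpleGraph.neighborFinset_eq_filter,
    Finset.card_filter]
  rw [Finset.sum_congr rfl (fun j _ => if_congr (sgm_adj_iff i j) rfl rfl)]
  exact Fin.sum_univ_eq_sum_range (fun k => if Cnum i.val k then 1 else 0) n

lemma sgm_card_edges (n : ℕ) (hn : 3 ≤ n) : (SgraphMinus n).edgeFinset.card = 2 * n - 4 := by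
  have hsum := SimpleGraph.sum_degrees_eq_twice_card_edges (SgraphMinus n)
  have hlhs : ∑ i : Fin n, (SgraphMinus n).degree i = 4 * n - 8 := by
    rw [Finset.sum_congr rfl (fun i _ => sgm_degree n i)]
    rw [Fin.sum_univ_eq_sum_range (fun a => ∑ k ∈ Finset.range n, (if Cnum a k then 1 else 0)) n]
    rw [sum_split3 n hn]
    have hD0 : ∑ k ∈ Finset.range n, (if Cnum 0 k then (1:ℕ) else 0) = n - 1 := by
      rw [sum_split3 n hn, sum_tail_const n _ 1 (fun k hk => if_pos (by unfold Cnum; omega))]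
      rw [if_neg (by unfold Cnum; omega), if_pos (by unfold Cnum; omega),
        if_pos (by unfold Cnum; omega)]
      simp; omega
    have hD1 : ∑ k ∈ Finset.range n, (if Cnum 1 k then (1:ℕ) else 0) = n - 2 := by
      rw [sum_split3 n hn, sum_tail_const n _ 1 (fun k hk => if_pos (by unfold Cnum; omega))]
      rw [if_pos (by unfold Cnum; omega), if_neg (by unfold Cnum; omega),
        if_neg (by unfold Cnum; omega)]
      simp; omega
    have hD2 : ∑ k ∈ Finset.range n, (if Cnum 2 k then (1:ℕ) else 0) = 1 := by
      rw [sum_split3 n hn, sum_tail_const n _ 0 (fun k hk => if_neg (by unfold Cnum; omega))]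
      rw [if_pos (by unfold Cnum; omega), if_neg (by unfold Cnum; omega),
        if_neg (by unfold Cnum; omega)]
      simp
    have hDa : ∑ a ∈ Finset.Ico 3 n, (∑ k ∈ Finset.range n, (if Cnum a k then (1:ℕ) else 0))
        = (n - 3) * 2 := by
      rw [sum_tail_const n _ 2 (fun a ha => by
        rw [sum_split3 n hn, sum_tail_const n _ 0 (fun k hk => if_neg (by unfold Cnum; omega))]
        rw [if_pos (by unfold Cnum; omega), if_pos (by unfold Cnum; omega),
          if_neg (by unfold Cnum; omega)]
        simp)]
      simp [mul_comm]
    rw [hD0, hD1, hD2, hDa]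
    omega
  rw [hlhs] at hsum
  omega

lemma sgm_ncard (n : ℕ) (hn : 3 ≤ n) : (SgraphMinus n).edgeSet.ncard = 2 * n - 4 := by
  rw [← SimpleGraph.coe_edgeFinset, Set.ncard_coe_finset]
  exact sgm_card_edges n hn

lemma sgm_noiso (n : ℕ) (hn : 2 ≤ n) : ∀ v : Fin n, ∃ w, (SgraphMinus n).Adj v w := by
  intro v
  by_cases h : v.val = 0
  · exact ⟨⟨1, by omega⟩, (sgm_adj_iff _ _).2 (by unfold Cnum; simp; omega)⟩
  · exact ⟨⟨0, by omega⟩, (sgm_adj_iff _ _).2 (by unfold Cnum; simp; omega)⟩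
open Matrix

lemma rayleigh_le_sSup {n : ℕ} (A : Matrix (Fin n) (Fin n) ℝ) (hA : A.IsHermitian)
    (y : Fin n → ℝ) (hy : y ≠ 0) :
    y ⬝ᵥ (A *ᵥ y) ≤ sSup {t : ℝ | ∃ x : Fin n → ℝ, x ≠ 0 ∧ A *ᵥ x = t • x} * (y ⬝ᵥ y) := by
  classical
  set S := {t : ℝ | ∃ x : Fin n → ℝ, x ≠ 0 ∧ A *ᵥ x = t • x} with hS
  set E := EuclideanSpace ℝ (Fin n)
  set T : E →L[ℝ] E := LinearMap.toContinuousLinearMap (Matrix.toEuclideanLin A) with hT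
  have hTapp : ∀ v : E, T v = A *ᵥ (v : Fin n → ℝ) := by
    intro v
    simp [hT, Matrix.toEuclideanLin_apply]
    rfl
  have hsymm : (T : E →ₗ[ℝ] E).IsSymmetric := by
    have h1 := (Matrix.isHermitian_iff_isSymmetric).1 hA
    exact h1
  have hyE : ((WithLp.equiv 2 _).symm y : E) ≠ 0 := by
    simpa using hy
  have : Nontrivial E := nontrivial_of_ne _ 0 hyE
  -- S is bounded above by ‖T‖
  have hbdd : ∀ t ∈ S, t ≤ ‖T‖ := by
    rintro t ⟨x, hx, hax⟩
    have hxE : ((WithLp.equiv 2 _).symm x : E) ≠ 0 := by simpa using hx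
    have hnorm : ‖T ((WithLp.equiv 2 _).symm x)‖ ≤ ‖T‖ * ‖((WithLp.equiv 2 _).symm x : E)‖ :=
      T.le_opNorm _
    have hTx : T ((WithLp.equiv 2 _).symm x) = (t • ((WithLp.equiv 2 _).symm x) : E) := by
      apply WithLp.ofLp_injective
      rw [hTapp ((WithLp.equiv 2 _).symm x)]
      simpa using hax
    rw [hTx, norm_smul] at hnorm
    have hpos : 0 < ‖((WithLp.equiv 2 _).symm x : E)‖ := norm_pos_iff.2 hxE
    have habs : |t| ≤ ‖T‖ := by
      have := (mul_le_mul_iff_of_pos_right hpos).1 hnorm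
      simpa using this
    exact le_trans (le_abs_self t) habs
  have hSbdd : BddAbove S := ⟨‖T‖, hbdd⟩
  -- the sup of the Rayleigh quotient is an eigenvalue
  set μ : ℝ := ⨆ x : { x : E // x ≠ 0 }, T.rayleighQuotient x with hμ
  have heig : Module.End.HasEigenvalue (T : E →ₗ[ℝ] E) μ :=
    hsymm.hasEigenvalue_iSup_of_finiteDimensional
  obtain ⟨v, hv⟩ := heig.exists_hasEigenvector
  have hμS : μ ∈ S := by
    refine ⟨(WithLp.equiv 2 _) v, by simpa using hv.right, ?_⟩
    have h1 : T v = μ • v := by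
      have := hv.apply_eq_smul
      simpa [hT] using this
    have h2 := hTapp v
    rw [h1] at h2
    exact h2.symm
  have hμle : μ ≤ sSup S := le_csSup hSbdd hμS
  -- Rayleigh quotient of y is at most μ
  have hray : T.rayleighQuotient ((WithLp.equiv 2 _).symm y) ≤ μ := by
    have hbddray : BddAbove (Set.range fun x : { x : E // x ≠ 0 } => T.rayleighQuotient x) := by
      refine ⟨‖T‖, ?_⟩
      rintro r ⟨⟨x, hx⟩, rfl⟩
      have hxpos : 0 < ‖x‖ := norm_pos_iff.2 hx
      have h1 : T.reApplyInnerSelf x ≤ ‖T x‖ * ‖x‖ := by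
        refine le_trans ?_ (abs_real_inner_le_norm (T x) x)
        exact le_abs_self _
      have h2 : ‖T x‖ * ‖x‖ ≤ ‖T‖ * ‖x‖ * ‖x‖ :=
        mul_le_mul_of_nonneg_right (T.le_opNorm x) (norm_nonneg x)
      have h3 : T.rayleighQuotient x ≤ (‖T‖ * ‖x‖ * ‖x‖) / ‖x‖ ^ 2 :=
        div_le_div_of_nonneg_right (le_trans h1 h2) (sq_nonneg _)
      have h4 : (‖T‖ * ‖x‖ * ‖x‖) / ‖x‖ ^ 2 = ‖T‖ := by
        rw [sq]; field_simp
      exact h3.trans_eq h4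
    exact le_ciSup hbddray ⟨_, hyE⟩
  -- translate back to dot products
  have hinner : T.reApplyInnerSelf ((WithLp.equiv 2 _).symm y) = y ⬝ᵥ (A *ᵥ y) := by
    have hTy : T ((WithLp.equiv 2 _).symm y) = (WithLp.equiv 2 _).symm (A *ᵥ y) := by
      apply WithLp.ofLp_injective
      rw [hTapp ((WithLp.equiv 2 _).symm y)]
      rfl
    rw [ContinuousLinearMap.reApplyInnerSelf, hTy]
    rw [PiLp.inner_apply]
    simp [dotProduct, mul_comm]
  have hnormy : (‖((WithLp.equiv 2 _).symm y : E)‖ : ℝ) ^ 2 = y ⬝ᵥ y := by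
    rw [← real_inner_self_eq_norm_sq, PiLp.inner_apply]
    simp [dotProduct, sq]
  have hypos : 0 < y ⬝ᵥ y := by
    rw [← hnormy]
    have := norm_pos_iff.2 hyE
    positivity
  have hfinal := hray.trans hμle
  rw [ContinuousLinearMap.rayleighQuotient, hinner, hnormy] at hfinal
  calc y ⬝ᵥ (A *ᵥ y) = (y ⬝ᵥ (A *ᵥ y)) / (y ⬝ᵥ y) * (y ⬝ᵥ y) := by field_simp
    _ ≤ sSup S * (y ⬝ᵥ y) := mul_le_mul_of_nonneg_right hfinal hypos.le

lemma sgm_spec_lower (n : ℕ) (hn : 21 ≤ n) :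
    ∃ lam : ℝ, 1 ≤ lam ∧ lam ^ 2 = lam + (2 * (n:ℝ) - 6) ∧ lam < specRad (SgraphMinus n) := by
  have hn3 : 3 ≤ n := by omega
  have hncast : (21:ℝ) ≤ (n:ℝ) := by exact_mod_cast hn
  set s : ℝ := (n : ℝ) - 3 with hs_def
  have hs : (18:ℝ) ≤ s := by rw [hs_def]; linarith
  have h8s : (0:ℝ) ≤ 8 * s + 1 := by linarith
  set t : ℝ := Real.sqrt (8 * s + 1) with ht_def
  have ht2 : t ^ 2 = 8 * s + 1 := Real.sq_sqrt h8s
  have ht0 : 0 ≤ t := Real.sqrt_nonneg _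
  have ht12 : 12 ≤ t := by nlinarith
  set lam : ℝ := (1 + t) / 2 with hlam_def
  have hlam1 : 1 ≤ lam := by rw [hlam_def]; linarith
  have hlamsq : lam ^ 2 = lam + 2 * s := by rw [hlam_def]; linear_combination (1/4) * ht2
  set p : ℝ := lam / 2 with hp_def
  have hp0 : 0 < p := by rw [hp_def]; linarith
  set Y : ℕ → ℝ := fun k => if k = 0 ∨ k = 1 then p else if k = 2 then 1/2 else 1 with hY
  set y : Fin n → ℝ := fun i => Y i.val with hy_def
  have hy0 : y ≠ 0 := by
    intro h
    have h0 : y ⟨0, by omega⟩ = 0 := by rw [h]; rfl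
    rw [hy_def] at h0
    simp only [hY] at h0
    norm_num at h0
    linarith
  set A := adjMat (SgraphMinus n) with hA
  set R : ℕ → ℝ := fun a => ∑ k ∈ Finset.range n, (if Cnum a k then Y k else 0) with hR
  have hmul : ∀ i : Fin n, (A *ᵥ y) i = R i.val := by
    intro i
    show ∑ j, A i j * y j = R i.val
    have h1 : ∀ j : Fin n, A i j * y j = (if Cnum i.val j.val then Y j.val else 0) := by
      intro j
      have hAij : A i j = (if Cnum i.val j.val then (1:ℝ) else 0) := by
        rw [hA]
        unfold adjMat
        by_cases h : (SgraphMinus n).Adj i j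
        · rw [if_pos h, if_pos ((sgm_adj_iff i j).1 h)]
        · rw [if_neg h, if_neg (fun hc => h ((sgm_adj_iff i j).2 hc))]
      rw [hAij]
      simp only [hy_def]
      by_cases h : Cnum i.val j.val
      · rw [if_pos h, if_pos h, one_mul]
      · rw [if_neg h, if_neg h, zero_mul]
    rw [Finset.sum_congr rfl (fun j _ => h1 j)]
    exact Fin.sum_univ_eq_sum_range (fun k => if Cnum i.val k then Y k else 0) n
  have hdot : y ⬝ᵥ (A *ᵥ y) = ∑ a ∈ Finset.range n, Y a * R a := by
    show ∑ i, y i * (A *ᵥ y) i = _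
    rw [Finset.sum_congr rfl (fun i _ => by rw [hmul i])]
    exact Fin.sum_univ_eq_sum_range (fun a => Y a * R a) n
  have hcast : ((n - 3 : ℕ) : ℝ) = s := by
    rw [hs_def, Nat.cast_sub hn3]; norm_num
  have hIco : ∀ (g : ℕ → ℝ) (c : ℝ), (∀ k, 3 ≤ k → g k = c) →
      ∑ k ∈ Finset.Ico 3 n, g k = s * c := by
    intro g c hg
    rw [sum_tail_const n g c hg, nsmul_eq_mul, hcast]
  have hYtail : ∀ k, 3 ≤ k → Y k = 1 := by
    intro k hk
    simp only [hY]
    rw [if_neg (by omega : ¬(k = 0 ∨ k = 1)), if_neg (by omega : ¬(k = 2))]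
  have hY0 : Y 0 = p := by simp only [hY]; norm_num
  have hY1 : Y 1 = p := by simp only [hY]; norm_num
  have hY2 : Y 2 = 1/2 := by simp only [hY]; norm_num
  have hR0 : R 0 = p + 1/2 + s := by
    simp only [hR]
    rw [sum_split3 n hn3, hIco _ 1 (fun k hk => by
      rw [if_pos (show Cnum 0 k by unfold Cnum; omega), hYtail k hk])]
    rw [if_neg (show ¬ Cnum 0 0 by unfold Cnum; omega),
      if_pos (show Cnum 0 1 by unfold Cnum; omega),
      if_pos (show Cnum 0 2 by unfold Cnum; omega), hY1, hY2]
    ring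
  have hR1 : R 1 = p + s := by
    simp only [hR]
    rw [sum_split3 n hn3, hIco _ 1 (fun k hk => by
      rw [if_pos (show Cnum 1 k by unfold Cnum; omega), hYtail k hk])]
    rw [if_pos (show Cnum 1 0 by unfold Cnum; omega),
      if_neg (show ¬ Cnum 1 1 by unfold Cnum; omega),
      if_neg (show ¬ Cnum 1 2 by unfold Cnum; omega), hY0]
    ring
  have hR2 : R 2 = p := by
    simp only [hR]
    rw [sum_split3 n hn3, hIco _ 0 (fun k hk => if_neg (show ¬ Cnum 2 k by unfold Cnum; omega))]
    rw [if_pos (show Cnum 2 0 by unfold Cnum; omega),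
      if_neg (show ¬ Cnum 2 1 by unfold Cnum; omega),
      if_neg (show ¬ Cnum 2 2 by unfold Cnum; omega), hY0]
    ring
  have hRa : ∀ a, 3 ≤ a → R a = 2 * p := by
    intro a ha
    simp only [hR]
    rw [sum_split3 n hn3, hIco _ 0 (fun k hk => if_neg (show ¬ Cnum a k by unfold Cnum; omega))]
    rw [if_pos (show Cnum a 0 by unfold Cnum; omega),
      if_pos (show Cnum a 1 by unfold Cnum; omega),
      if_neg (show ¬ Cnum a 2 by unfold Cnum; omega), hY0, hY1]
    ring
  have hNum : y ⬝ᵥ (A *ᵥ y) = 2*p^2 + p + 4*s*p := by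
    rw [hdot, sum_split3 n hn3, hIco _ (2*p) (fun a ha => by
      rw [hYtail a ha, hRa a ha, one_mul])]
    rw [hY0, hY1, hY2, hR0, hR1, hR2]
    ring
  have hDen : y ⬝ᵥ y = 2*p^2 + 1/4 + s := by
    show ∑ i, y i * y i = _
    rw [Finset.sum_congr rfl (fun i _ => by rw [hy_def])]
    rw [Fin.sum_univ_eq_sum_range (fun a => Y a * Y a) n]
    rw [sum_split3 n hn3, hIco _ 1 (fun k hk => by rw [hYtail k hk, one_mul])]
    rw [hY0, hY1, hY2]
    ring
  have hherm := adjMat_isHermitian (SgraphMinus n)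
  have hray := rayleigh_le_sSup A hherm y hy0
  have hspec : y ⬝ᵥ (A *ᵥ y) ≤ specRad (SgraphMinus n) * (y ⬝ᵥ y) := hray
  have hden0 : (0:ℝ) < y ⬝ᵥ y := by rw [hDen]; nlinarith
  have hkey : lam * (y ⬝ᵥ y) < y ⬝ᵥ (A *ᵥ y) := by
    rw [hNum, hDen, hp_def]
    nlinarith [hlamsq, hlam1, hs]
  refine ⟨lam, hlam1, by rw [hlamsq, hs_def]; ring, ?_⟩
  exact lt_of_mul_lt_mul_right (hkey.trans_le hspec) (le_of_lt hden0)


variable {V : Type*} [Fintype V] [DecidableEq V]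

lemma neighbor_inter_eq (G : SimpleGraph V) [DecidableRel G.Adj] (S : Finset V) (w : V) :
    G.neighborFinset w ∩ S = S.filter (fun v => G.Adj w v) := by
  ext v
  simp [SimpleGraph.mem_neighborFinset, and_comm]

lemma handshake_in (G : SimpleGraph V) [DecidableRel G.Adj] (S : Finset V) :
    ∑ w ∈ S, (G.neighborFinset w ∩ S).card
      = 2 * (G.edgeFinset.filter (fun e => ∀ v ∈ e, v ∈ S)).card := by
  classical
  set t := G.edgeFinset.filter (fun e => ∀ v ∈ e, v ∈ S) with ht
  have h1 : ∑ w ∈ S, (G.neighborFinset w ∩ S).card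
      = ((S ×ˢ S).filter (fun p => G.Adj p.1 p.2)).card := by
    rw [Finset.card_filter, Finset.sum_product]
    refine Finset.sum_congr rfl (fun w _ => ?_)
    rw [neighbor_inter_eq, Finset.card_filter]
  rw [h1]
  rw [Finset.card_eq_sum_card_fiberwise
    (f := fun p : V × V => s(p.1, p.2)) (t := t) ?hmem]
  case hmem =>
    rintro ⟨a, b⟩ hp
    rw [Finset.mem_coe, Finset.mem_filter, Finset.mem_product] at hp
    obtain ⟨⟨haS, hbS⟩, hadj⟩ := hp
    rw [Finset.mem_coe, ht, Finset.mem_filter]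
    refine ⟨SimpleGraph.mem_edgeFinset.2 hadj, ?_⟩
    intro v hv
    rw [Sym2.mem_iff] at hv
    rcases hv with rfl | rfl <;> assumption
  have hfib : ∀ e ∈ t,
      (((S ×ˢ S).filter (fun p => G.Adj p.1 p.2)).filter (fun a : V × V => s(a.1, a.2) = e)).card
        = 2 := by
    intro e he
    induction e using Sym2.ind with
    | _ a b =>
      rw [ht, Finset.mem_filter] at he
      obtain ⟨heE, hall⟩ := he
      have hadj : G.Adj a b := (G.mem_edgeSet).1 (SimpleGraph.mem_edgeFinset.1 heE)
      have haS : a ∈ S := hall a (Sym2.mem_mk_left a b)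
      have hbS : b ∈ S := hall b (Sym2.mem_mk_right a b)
      have hne : a ≠ b := G.ne_of_adj hadj
      have hset : (((S ×ˢ S).filter (fun p => G.Adj p.1 p.2)).filter
          (fun p : V × V => s(p.1, p.2) = s(a,b))) = {(a,b), (b,a)} := by
        ext ⟨x, y⟩
        simp only [Finset.mem_filter, Finset.mem_product, Finset.mem_insert,
          Finset.mem_singleton, Prod.mk.injEq, Sym2.eq_iff]
        constructor
        · rintro ⟨⟨⟨hxS, hyS⟩, hxy⟩, heq⟩
          exact heq
        · rintro (⟨rfl, rfl⟩ | ⟨rfl, rfl⟩)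
          · exact ⟨⟨⟨haS, hbS⟩, hadj⟩, Or.inl ⟨rfl, rfl⟩⟩
          · exact ⟨⟨⟨hbS, haS⟩, hadj.symm⟩, Or.inr ⟨rfl, rfl⟩⟩
      rw [hset]
      rw [Finset.card_insert_of_notMem (by
        simp only [Finset.mem_singleton, Prod.mk.injEq, not_and]
        intro h; exact absurd h hne), Finset.card_singleton]
  rw [Finset.sum_congr rfl hfib, Finset.sum_const, smul_eq_mul, Nat.mul_comm]

lemma cross_count (G : SimpleGraph V) [DecidableRel G.Adj] (S T : Finset V)
    (hdisj : ∀ a, a ∈ S → a ∉ T) :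
    ∑ w ∈ T, (G.neighborFinset w ∩ S).card
      = (G.edgeFinset.filter (fun e => ∃ a ∈ S, ∃ b ∈ T, e = s(a,b))).card := by
  classical
  set t := G.edgeFinset.filter (fun e => ∃ a ∈ S, ∃ b ∈ T, e = s(a,b)) with ht
  have h1 : ∑ w ∈ T, (G.neighborFinset w ∩ S).card
      = ((T ×ˢ S).filter (fun p => G.Adj p.1 p.2)).card := by
    rw [Finset.card_filter, Finset.sum_product]
    refine Finset.sum_congr rfl (fun w _ => ?_)
    rw [neighbor_inter_eq, Finset.card_filter]
  rw [h1]
  rw [Finset.card_eq_sum_card_fiberwise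
    (f := fun p : V × V => s(p.1, p.2)) (t := t) ?hmem]
  case hmem =>
    rintro ⟨b, a⟩ hp
    rw [Finset.mem_coe, Finset.mem_filter, Finset.mem_product] at hp
    obtain ⟨⟨hbT, haS⟩, hadj⟩ := hp
    rw [Finset.mem_coe, ht, Finset.mem_filter]
    exact ⟨SimpleGraph.mem_edgeFinset.2 hadj, a, haS, b, hbT, Sym2.eq_swap⟩
  have hfib : ∀ e ∈ t,
      (((T ×ˢ S).filter (fun p => G.Adj p.1 p.2)).filter (fun p : V × V => s(p.1, p.2) = e)).card
        = 1 := by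
    intro e he
    rw [ht, Finset.mem_filter] at he
    obtain ⟨heE, a, haS, b, hbT, rfl⟩ := he
    have hadj : G.Adj a b := (G.mem_edgeSet).1 (SimpleGraph.mem_edgeFinset.1 heE)
    have hne : a ≠ b := G.ne_of_adj hadj
    have hset : (((T ×ˢ S).filter (fun p => G.Adj p.1 p.2)).filter
        (fun p : V × V => s(p.1, p.2) = s(a,b))) = {(b, a)} := by
      ext ⟨x, y⟩
      simp only [Finset.mem_filter, Finset.mem_product, Finset.mem_singleton, Prod.mk.injEq,
        Sym2.eq_iff]
      constructor
      · rintro ⟨⟨⟨hxT, hyS⟩, hxy⟩, h | h⟩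
        · exact absurd (h.1 ▸ hxT) (hdisj a haS)
        · exact h
      · rintro ⟨rfl, rfl⟩
        exact ⟨⟨⟨hbT, haS⟩, hadj.symm⟩, Or.inr ⟨rfl, rfl⟩⟩
    rw [hset, Finset.card_singleton]
  rw [Finset.sum_congr rfl hfib, Finset.sum_const, smul_eq_mul, Nat.mul_one]

lemma edge_partition (G : SimpleGraph V) [DecidableRel G.Adj] (u : V) :
    G.edgeFinset.card
      = G.degree u
        + (G.edgeFinset.filter (fun e => ∀ v ∈ e, v ∈ G.neighborFinset u)).card
        + (G.edgeFinset.filter (fun e => ∃ a ∈ G.neighborFinset u,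
            ∃ b ∈ (insert u (G.neighborFinset u))ᶜ, e = s(a,b))).card
        + (G.edgeFinset.filter (fun e => ∀ v ∈ e, v ∈ (insert u (G.neighborFinset u))ᶜ)).card := by
  classical
  set Nf := G.neighborFinset u with hNf
  set Wf := (insert u Nf)ᶜ with hWf
  set E := G.edgeFinset with hE
  have huN : u ∉ Nf := by rw [hNf]; exact G.notMem_neighborFinset_self u
  have huW : u ∉ Wf := by rw [hWf]; simp
  have hvW : ∀ v : V, v ≠ u → v ∉ Nf → v ∈ Wf := by
    intro v h1 h2
    rw [hWf, Finset.mem_compl, Finset.mem_insert]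
    push_neg
    exact ⟨h1, h2⟩
  have hWnotN : ∀ v, v ∈ Wf → v ∉ Nf := by
    intro v hv hN
    rw [hWf, Finset.mem_compl, Finset.mem_insert] at hv
    push_neg at hv
    exact hv.2 hN
  have h1 := Finset.card_filter_add_card_filter_not
    (s := E) (p := fun e => ∀ v ∈ e, v ∈ Nf)
  have h2 := Finset.card_filter_add_card_filter_not
    (s := E.filter (fun e => ¬ ∀ v ∈ e, v ∈ Nf)) (p := fun e => ∀ v ∈ e, v ∈ Wf)
  have h3 := Finset.card_filter_add_card_filter_not
    (s := (E.filter (fun e => ¬ ∀ v ∈ e, v ∈ Nf)).filter (fun e => ¬ ∀ v ∈ e, v ∈ Wf))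
    (p := fun e => u ∈ e)
  rw [Finset.filter_filter, Finset.filter_filter] at h2
  rw [Finset.filter_filter, Finset.filter_filter, Finset.filter_filter,
    Finset.filter_filter, Finset.filter_filter] at h3
  have eqA : E.filter (fun e => (¬ ∀ v ∈ e, v ∈ Nf) ∧ ∀ v ∈ e, v ∈ Wf)
      = E.filter (fun e => ∀ v ∈ e, v ∈ Wf) := by
    refine Finset.filter_congr (fun e he => ?_)
    induction e using Sym2.ind with
    | _ a b =>
      have haW : a ∈ s(a,b) := Sym2.mem_mk_left a b
      simp only [and_iff_right_iff_imp]
      intro hallW hallN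
      exact hWnotN a (hallW a haW) (hallN a haW)
  have eqB : E.filter (fun e => (¬ ∀ v ∈ e, v ∈ Nf) ∧ (¬ ∀ v ∈ e, v ∈ Wf) ∧ u ∈ e)
      = E.filter (fun e => u ∈ e) := by
    refine Finset.filter_congr (fun e he => ?_)
    constructor
    · rintro ⟨_, _, hu⟩
      exact hu
    · intro hu
      exact ⟨fun hallN => huN (hallN u hu), fun hallW => huW (hallW u hu), hu⟩
  have eqC : E.filter (fun e => (¬ ∀ v ∈ e, v ∈ Nf) ∧ (¬ ∀ v ∈ e, v ∈ Wf) ∧ u ∉ e)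
      = E.filter (fun e => ∃ a ∈ Nf, ∃ b ∈ Wf, e = s(a,b)) := by
    refine Finset.filter_congr (fun e he => ?_)
    induction e using Sym2.ind with
    | _ a b =>
      have hadj : G.Adj a b := (G.mem_edgeSet).1 (SimpleGraph.mem_edgeFinset.1 (hE ▸ he))
      constructor
      · rintro ⟨hnN, hnW, hnu⟩
        have hau : a ≠ u := fun h => hnu (h ▸ Sym2.mem_mk_left a b)
        have hbu : b ≠ u := fun h => hnu (h ▸ Sym2.mem_mk_right a b)
        by_cases haN : a ∈ Nf
        · have hbN : b ∉ Nf := by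
            intro hbN
            exact hnN (fun v hv => by
              rcases Sym2.mem_iff.1 hv with rfl | rfl
              · exact haN
              · exact hbN)
          exact ⟨a, haN, b, hvW b hbu hbN, rfl⟩
        · have haW : a ∈ Wf := hvW a hau haN
          have hbN : b ∈ Nf := by
            by_contra hbN
            have hbW : b ∈ Wf := hvW b hbu hbN
            exact hnW (fun v hv => by
              rcases Sym2.mem_iff.1 hv with rfl | rfl
              · exact haW
              · exact hbW)
          exact ⟨b, hbN, a, haW, Sym2.eq_swap⟩
      · rintro ⟨c, hcN, d, hdW, heq⟩
        rw [heq]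
        refine ⟨?_, ?_, ?_⟩
        · intro hallN
          exact hWnotN d hdW (hallN d (Sym2.mem_mk_right c d))
        · intro hallW
          exact hWnotN c (hallW c (Sym2.mem_mk_left c d)) hcN
        · intro hu
          rcases Sym2.mem_iff.1 hu with rfl | rfl
          · exact huN hcN
          · exact huW hdW
  have eqD : (E.filter (fun e => u ∈ e)).card = G.degree u := by
    rw [← SimpleGraph.card_incidenceFinset_eq_degree]
    congr 1
    ext e
    simp [SimpleGraph.mem_incidenceFinset, SimpleGraph.incidenceSet, hE,
      SimpleGraph.mem_edgeFinset]
  rw [eqA] at h2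
  rw [eqB, eqC] at h3
  omega

end Aux

/-- For an extremal graph `G` (even `m ≥ 38`) with Perron vector `x`
maximized at `u`, we have `e(W) ≤ e(A₊) − |A₊| + 1`. -/
theorem stmt16 {V : Type*} [Fintype V] (m : ℕ) (hm : 38 ≤ m) (hme : Even m)
    (G : SimpleGraph V) (hext : IsExtremal m G)
    (x : V → ℝ) (hxpos : ∀ v, 0 < x v)
    (heig : (adjMat G).mulVec x = specRad G • x)
    (u : V) (hmaxx : ∀ v, x v ≤ x u)
    (N W Ap : Set V)
    (hN : N = G.neighborSet u)
    (hW : W = (insert u N)ᶜ)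
    (hAp : Ap = {v ∈ N | ∃ w ∈ N, G.Adj v w}) :
    (eIn G W : ℝ) ≤ (eIn G Ap : ℝ) - (Ap.ncard : ℝ) + 1 := by
  classical
  obtain ⟨hfree, hcard, hniso, hmax⟩ := hext
  set ρ := specRad G with hρdef
  -- eigen equation, row form
  have hrow : ∀ v : V, ∑ w ∈ G.neighborFinset v, x w = ρ * x v := by
    intro v
    have h := congrFun heig v
    have hL : (adjMat G).mulVec x v = ∑ w, (adjMat G) v w * x w := rfl
    rw [hL] at h
    calc ∑ w ∈ G.neighborFinset v, x w
        = ∑ w, (adjMat G) v w * x w := by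
          rw [SimpleGraph.neighborFinset_eq_filter, Finset.sum_filter]
          refine Finset.sum_congr rfl (fun w _ => ?_)
          unfold adjMat
          by_cases hadj : G.Adj v w
          · rw [if_pos hadj, if_pos hadj, one_mul]
          · rw [if_neg hadj, if_neg hadj, zero_mul]
      _ = ρ * x v := h
  set Nf := G.neighborFinset u with hNfdef
  set Wf := (insert u Nf)ᶜ with hWfdef
  set dN : V → ℕ := fun w => (G.neighborFinset w ∩ Nf).card with hdNdef
  set Apf := Nf.filter (fun v => ∃ w ∈ Nf, G.Adj v w) with hApfdef
  have huN : u ∉ Nf := by rw [hNfdef]; exact G.notMem_neighborFinset_self u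
  -- positivity of ρ
  obtain ⟨w0, hw0⟩ := hniso u
  have hNne : Nf.Nonempty := ⟨w0, by rw [hNfdef]; exact (SimpleGraph.mem_neighborFinset G u w0).2 hw0⟩
  have hsumpos : 0 < ∑ w ∈ Nf, x w := Finset.sum_pos (fun i _ => hxpos i) hNne
  have hρpos : 0 < ρ := by nlinarith [hxpos u, hsumpos, hrow u]
  -- second eigen-equation
  have hsq : ρ^2 * x u = ∑ w, (dN w : ℝ) * x w := by
    have e1 : ρ^2 * x u = ∑ v ∈ Nf, ρ * x v := by
      rw [← Finset.mul_sum, hrow u]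
      ring
    have e2 : ∀ v : V, ρ * x v = ∑ w, if G.Adj v w then x w else 0 := by
      intro v
      rw [← hrow v, SimpleGraph.neighborFinset_eq_filter, Finset.sum_filter]
    rw [e1, Finset.sum_congr rfl (fun v _ => e2 v), Finset.sum_comm]
    refine Finset.sum_congr rfl (fun w _ => ?_)
    rw [← Finset.sum_filter, Finset.sum_const, nsmul_eq_mul]
    have hcards : (Nf.filter (fun v => G.Adj v w)).card = dN w := by
      simp only [hdNdef]
      congr 1
      ext v
      simp only [Finset.mem_filter, Finset.mem_inter, SimpleGraph.mem_neighborFinset]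
      constructor
      · rintro ⟨h1, h2⟩
        exact ⟨h2.symm, h1⟩
      · rintro ⟨h1, h2⟩
        exact ⟨h2, h1.symm⟩
    rw [hcards]
  have hdNu : dN u = Nf.card := by
    simp only [hdNdef]
    rw [← hNfdef, Finset.inter_self]
  -- split the full sum into u, Nf, Wf
  have hsplit : ∑ w, (dN w : ℝ) * x w
      = (Nf.card : ℝ) * x u + ∑ w ∈ Nf, (dN w : ℝ) * x w + ∑ w ∈ Wf, (dN w : ℝ) * x w := by
    rw [← Finset.sum_add_sum_compl (insert u Nf) (fun w => (dN w : ℝ) * x w)]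
    rw [Finset.sum_insert huN, hdNu, ← hWfdef]
  -- bound the W-part
  have hWbound : ∑ w ∈ Wf, (dN w : ℝ) * x w ≤ ((∑ w ∈ Wf, dN w : ℕ) : ℝ) * x u := by
    rw [Nat.cast_sum, Finset.sum_mul]
    exact Finset.sum_le_sum (fun w _ =>
      mul_le_mul_of_nonneg_left (hmaxx w) (Nat.cast_nonneg _))
  -- bound the N-part
  have hApN : ∀ w ∈ Apf, 1 ≤ dN w := by
    intro w hw
    rw [hApfdef, Finset.mem_filter] at hw
    obtain ⟨w', hw'N, hadj⟩ := hw.2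
    have hmem : w' ∈ G.neighborFinset w ∩ Nf :=
      Finset.mem_inter.2 ⟨(SimpleGraph.mem_neighborFinset G w w').2 hadj, hw'N⟩
    have hpos := Finset.card_pos.2 ⟨w', hmem⟩
    exact hpos
  have hdN0 : ∀ w ∈ Nf.filter (fun v => ¬ ∃ w' ∈ Nf, G.Adj v w'), dN w = 0 := by
    intro w hw
    rw [Finset.mem_filter] at hw
    simp only [hdNdef]
    rw [Finset.card_eq_zero]
    by_contra hne
    obtain ⟨v, hv⟩ := Finset.nonempty_iff_ne_empty.2 hne
    rw [Finset.mem_inter, SimpleGraph.mem_neighborFinset] at hv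
    exact hw.2 ⟨v, hv.2, hv.1⟩
  have hsplitN : ∀ (f : V → ℝ), ∑ w ∈ Nf, f w
      = ∑ w ∈ Apf, f w + ∑ w ∈ Nf.filter (fun v => ¬ ∃ w' ∈ Nf, G.Adj v w'), f w := by
    intro f
    rw [hApfdef]
    exact (Finset.sum_filter_add_sum_filter_not Nf _ f).symm
  have hNbound : ∑ w ∈ Nf, (dN w : ℝ) * x w - ∑ w ∈ Nf, x w
      ≤ ((∑ w ∈ Nf, dN w : ℕ) : ℝ) * x u - (Apf.card : ℝ) * x u := by
    rw [← Finset.sum_sub_distrib, hsplitN (fun w => (dN w:ℝ) * x w - x w)]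
    have hrest : ∑ w ∈ Nf.filter (fun v => ¬ ∃ w' ∈ Nf, G.Adj v w'),
        ((dN w:ℝ) * x w - x w) ≤ 0 := by
      apply Finset.sum_nonpos
      intro w hw
      rw [hdN0 w hw]
      simp only [Nat.cast_zero, zero_mul, zero_sub, neg_nonpos]
      exact (hxpos w).le
    have hApb : ∑ w ∈ Apf, ((dN w:ℝ) * x w - x w) ≤ ∑ w ∈ Apf, ((dN w:ℝ) - 1) * x u := by
      apply Finset.sum_le_sum
      intro w hw
      have h1 : (1:ℝ) ≤ (dN w : ℝ) := by exact_mod_cast hApN w hw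
      have heq : (dN w:ℝ) * x w - x w = ((dN w:ℝ) - 1) * x w := by ring
      rw [heq]
      exact mul_le_mul_of_nonneg_left (hmaxx w) (by linarith)
    have hApsum : ∑ w ∈ Apf, ((dN w:ℝ) - 1) * x u
        = ((∑ w ∈ Nf, dN w : ℕ) : ℝ) * x u - (Apf.card : ℝ) * x u := by
      rw [← Finset.sum_mul, ← sub_mul]
      congr 1
      rw [Finset.sum_sub_distrib, Finset.sum_const, nsmul_eq_mul, mul_one]
      congr 1
      have hz : ∑ w ∈ Nf.filter (fun v => ¬ ∃ w' ∈ Nf, G.Adj v w'), (dN w:ℝ) = 0 :=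
        Finset.sum_eq_zero (fun w hw => by rw [hdN0 w hw]; norm_num)
      rw [Nat.cast_sum, hsplitN (fun w => (dN w:ℝ)), hz, add_zero]
    linarith
  have hWbound2 := hWbound
  have hKbound : (ρ^2 - ρ) * x u
      ≤ ((Nf.card : ℝ) + ((∑ w ∈ Nf, dN w : ℕ):ℝ) - (Apf.card:ℝ)
          + ((∑ w ∈ Wf, dN w : ℕ):ℝ)) * x u := by
    have hρxu : ρ * x u = ∑ w ∈ Nf, x w := (hrow u).symm
    have expand : (ρ^2 - ρ) * x u = ρ^2 * x u - ρ * x u := by ring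
    rw [expand, hsq, hsplit, hρxu]
    ring_nf
    nlinarith [hWbound, hNbound]
  have hK : ρ^2 - ρ ≤ (Nf.card : ℝ) + ((∑ w ∈ Nf, dN w : ℕ):ℝ) - (Apf.card:ℝ)
      + ((∑ w ∈ Wf, dN w : ℕ):ℝ) :=
    (mul_le_mul_iff_of_pos_right (hxpos u)).1 hKbound
  -- lower bound on the spectral radius via extremality
  obtain ⟨k, hk⟩ := hme
  have hcomp : specRad (SgraphMinus (k+2)) ≤ ρ :=
    hmax (k+2) (SgraphMinus (k+2)) (sgm_h43free (k+2))
      (by rw [sgm_ncard (k+2) (by omega)]; omega) (sgm_noiso (k+2) (by omega))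
  obtain ⟨lam, hlam1, hlamsq, hlamlt⟩ := sgm_spec_lower (k+2) (by omega)
  have hmr : lam + (2 * ((k+2:ℕ):ℝ) - 6) = lam + ((m:ℝ) - 2) := by
    have h4 : (m:ℕ) + 4 = 2 * (k + 2) := by omega
    have hc : (m:ℝ) + 4 = 2 * ((k+2:ℕ):ℝ) := by exact_mod_cast h4
    linarith
  rw [hmr] at hlamsq
  have hρlam : lam < ρ := lt_of_lt_of_le hlamlt hcomp
  have hlow : (m:ℝ) - 2 < ρ^2 - ρ := by nlinarith [hρlam, hlam1, hlamsq]
  -- counting identities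
  set eNN := (G.edgeFinset.filter (fun e => ∀ v ∈ e, v ∈ Nf)).card with heNNdef
  set eNW := (G.edgeFinset.filter (fun e => ∃ a ∈ Nf, ∃ b ∈ Wf, e = s(a,b))).card with heNWdef
  set eWW := (G.edgeFinset.filter (fun e => ∀ v ∈ e, v ∈ Wf)).card with heWWdef
  have hSN : ∑ w ∈ Nf, dN w = 2 * eNN := by
    simp only [hdNdef, heNNdef]
    exact handshake_in G Nf
  have hdisjNW : ∀ a, a ∈ Nf → a ∉ Wf := by
    intro a haN haW
    rw [hWfdef, Finset.mem_compl] at haW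
    exact haW (Finset.mem_insert_of_mem haN)
  have hSW : ∑ w ∈ Wf, dN w = eNW := by
    simp only [hdNdef, heNWdef]
    exact cross_count G Nf Wf hdisjNW
  have hmE : G.edgeFinset.card = m := by
    rw [← hcard, ← SimpleGraph.coe_edgeFinset, Set.ncard_coe_finset]
  have hdeg : G.degree u = Nf.card := by
    rw [hNfdef]
    exact (G.card_neighborFinset_eq_degree u).symm
  have hpart := edge_partition G u
  rw [← hNfdef] at hpart
  rw [← hWfdef] at hpart
  rw [← heNNdef, ← heNWdef, ← heWWdef, hmE, hdeg] at hpart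
  -- translations to the sets in the statement
  have hWcoe : (↑Wf : Set V) = W := by
    rw [hW, hN, hWfdef, hNfdef]
    rw [Finset.coe_compl, Finset.coe_insert, SimpleGraph.neighborFinset_def,
      Set.coe_toFinset]
  have hApcoe : (↑Apf : Set V) = Ap := by
    rw [hAp, hN, hApfdef]
    ext v
    simp only [Finset.coe_filter, Set.mem_setOf_eq, Set.mem_sep_iff, hNfdef,
      Finset.mem_coe, SimpleGraph.mem_neighborFinset, SimpleGraph.mem_neighborSet]
  have hApncard : Ap.ncard = Apf.card := by rw [← hApcoe, Set.ncard_coe_finset]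
  have heInW : eIn G W = eWW := by
    rw [← hWcoe, heWWdef]
    unfold eIn
    rw [← Set.ncard_coe_finset]
    congr 1
    ext e
    simp only [Set.mem_setOf_eq, Finset.coe_filter, SimpleGraph.mem_edgeFinset,
      Finset.mem_coe, Set.mem_sep_iff]
  have heInAp : eIn G Ap = eNN := by
    rw [← hApcoe, heNNdef]
    unfold eIn
    rw [← Set.ncard_coe_finset]
    congr 1
    ext e
    simp only [Set.mem_setOf_eq, Finset.coe_filter, SimpleGraph.mem_edgeFinset,
      Finset.mem_coe, Set.mem_sep_iff]
    induction e using Sym2.ind with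
    | _ a b =>
      constructor
      · rintro ⟨he, hall⟩
        exact ⟨he, fun v hv => Finset.filter_subset _ _ ((hApfdef ▸ hall v hv))⟩
      · rintro ⟨he, hall⟩
        have hadj : G.Adj a b := (G.mem_edgeSet).1 he
        refine ⟨he, fun v hv => ?_⟩
        rw [hApfdef]
        rcases Sym2.mem_iff.1 hv with rfl | rfl
        · exact Finset.mem_filter.2 ⟨hall v (Sym2.mem_mk_left v b),
            ⟨b, hall b (Sym2.mem_mk_right v b), hadj⟩⟩
        · exact Finset.mem_filter.2 ⟨hall v (Sym2.mem_mk_right a v),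
            ⟨a, hall a (Sym2.mem_mk_left a v), hadj.symm⟩⟩
  -- final arithmetic
  have hKtotal : (m:ℝ) - 2 < (Nf.card:ℝ) + ((∑ w ∈ Nf, dN w : ℕ):ℝ) - (Apf.card:ℝ)
      + ((∑ w ∈ Wf, dN w : ℕ):ℝ) := lt_of_lt_of_le hlow hK
  rw [hSN, hSW] at hKtotal
  have hmcast : (m:ℝ) = (Nf.card:ℝ) + (eNN:ℝ) + (eNW:ℝ) + (eWW:ℝ) := by exact_mod_cast hpart
  have hreal : (eWW:ℝ) + (Apf.card:ℝ) < (eNN:ℝ) + 2 := by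
    push_cast at hKtotal
    linarith
  have hnat : eWW + Apf.card < eNN + 2 := by exact_mod_cast hreal
  have hle : eWW + Apf.card ≤ eNN + 1 := by omega
  rw [heInW, heInAp, hApncard]
  have hlecast : ((eWW:ℕ):ℝ) + ((Apf.card:ℕ):ℝ) ≤ ((eNN:ℕ):ℝ) + 1 := by exact_mod_cast hle
  linarith
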